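/- Let n, k, b be integers with 1 ≤ k-1 ≤ b ≤ n, b ≥ k, and let 0 ≤ i < j ≤ n-(k-1). Then the graph distance in G_{n,k,b} between the vertices {i, i+1, ..., i+k-1} and {j, j+1, ..., j+k-1} equals ⌈(j-i)/(b-k+1)⌉. -/

import Mathlib

/-- The maximum element of a finite set of naturals (`0` for the empty set). -/
def fmax (X : Finset ℕ) : ℕ := WithBot.unbotD 0 X.max

/-- The minimum element of a finite set of naturals (`0` for the empty set). -/
def fmin (X : Finset ℕ) : ℕ := WithTop.untopD 0 X.min

/-- The vertex set `V_{n,k,b}`: all `k`-element subsets `X` of `{0,…,n}`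
with `max X - min X ≤ b`. -/
def Vnkb (n k b : ℕ) : Finset (Finset ℕ) :=
  ((Finset.range (n + 1)).powersetCard k).filter (fun X => fmax X - fmin X ≤ b)

/-- The graph `G_{n,k,b}`: two distinct vertices `X, Y` are adjacent iff
`max (X ∪ Y) - min (X ∪ Y) ≤ b`. -/
def Gnkb (n k b : ℕ) : SimpleGraph (Vnkb n k b) where
  Adj X Y := X ≠ Y ∧ fmax (X.1 ∪ Y.1) - fmin (X.1 ∪ Y.1) ≤ b
  symm := by
    constructor
    rintro X Y ⟨h1, h2⟩
    exact ⟨h1.symm, by rwa [Finset.union_comm]⟩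
  loopless := by constructor; rintro X ⟨h1, -⟩; exact h1 rfl

/-- The bandwidth of a finite graph: the minimum over all bijective labellings of the
vertices by `{0, …, |V|-1}` (equivalently `{1, …, |V|}`) of the maximal absolute
label difference along an edge. -/
noncomputable def bandwidth {V : Type*} [Fintype V] (G : SimpleGraph V) : ℕ :=
  sInf {m : ℕ | ∃ f : V ≃ Fin (Fintype.card V),
    ∀ u v : V, G.Adj u v → (((f u : ℕ) : ℤ) - ((f v : ℕ) : ℤ)).natAbs ≤ m}

lemma fmax_eq (X : Finset ℕ) (h : X.Nonempty) : fmax X = X.max' h := by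
  unfold fmax; rw [← Finset.coe_max' h]; rfl

lemma fmin_eq (X : Finset ℕ) (h : X.Nonempty) : fmin X = X.min' h := by
  unfold fmin; rw [← Finset.coe_min' h]; rfl

lemma fmax_Icc (a c : ℕ) (h : a ≤ c) : fmax (Finset.Icc a c) = c := by
  have hne : (Finset.Icc a c).Nonempty := Finset.nonempty_Icc.mpr h
  rw [fmax_eq _ hne]
  exact le_antisymm (Finset.max'_le _ _ _ fun y hy => (Finset.mem_Icc.mp hy).2)
    (Finset.le_max' _ c (Finset.mem_Icc.mpr ⟨h, le_rfl⟩))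

lemma fmin_Icc (a c : ℕ) (h : a ≤ c) : fmin (Finset.Icc a c) = a := by
  have hne : (Finset.Icc a c).Nonempty := Finset.nonempty_Icc.mpr h
  rw [fmin_eq _ hne]
  exact le_antisymm (Finset.min'_le _ a (Finset.mem_Icc.mpr ⟨le_rfl, h⟩))
    (Finset.le_min' _ _ _ fun y hy => (Finset.mem_Icc.mp hy).1)

lemma fmax_union (X Y : Finset ℕ) (hX : X.Nonempty) (hY : Y.Nonempty) :
    fmax (X ∪ Y) = max (fmax X) (fmax Y) := by
  rw [fmax_eq _ (hX.mono Finset.subset_union_left), fmax_eq _ hX, fmax_eq _ hY,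
    Finset.max'_union hX hY]

lemma fmin_union (X Y : Finset ℕ) (hX : X.Nonempty) (hY : Y.Nonempty) :
    fmin (X ∪ Y) = min (fmin X) (fmin Y) := by
  rw [fmin_eq _ (hX.mono Finset.subset_union_left), fmin_eq _ hX, fmin_eq _ hY,
    Finset.min'_union hX hY]

lemma Icc_mem_Vnkb (n k b t : ℕ) (hk : 1 ≤ k) (hkb : k - 1 ≤ b) (ht : t + (k - 1) ≤ n) :
    Finset.Icc t (t + (k - 1)) ∈ Vnkb n k b := by
  rw [Vnkb, Finset.mem_filter, Finset.mem_powersetCard]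
  refine ⟨⟨fun x hx => ?_, ?_⟩, ?_⟩
  · rw [Finset.mem_range]
    have := (Finset.mem_Icc.mp hx).2
    omega
  · rw [Nat.card_Icc]; omega
  · rw [fmax_Icc _ _ (by omega), fmin_Icc _ _ (by omega)]; omega

/-- The interval vertex. -/
def Iv (n k b t : ℕ) (hk : 1 ≤ k) (hkb : k - 1 ≤ b) (ht : t + (k - 1) ≤ n) : Vnkb n k b :=
  ⟨Finset.Icc t (t + (k - 1)), Icc_mem_Vnkb n k b t hk hkb ht⟩

lemma adj_Iv (n k b t u : ℕ) (hk : 1 ≤ k) (hkb : k - 1 ≤ b)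
    (ht : t + (k - 1) ≤ n) (hu : u + (k - 1) ≤ n) (htu : t < u) (hub : u + (k - 1) ≤ t + b) :
    (Gnkb n k b).Adj (Iv n k b t hk hkb ht) (Iv n k b u hk hkb hu) := by
  constructor
  · intro hEq
    have h1 : t ∈ Finset.Icc t (t + (k - 1)) := Finset.mem_Icc.mpr ⟨le_rfl, by omega⟩
    have h2 : (Iv n k b t hk hkb ht).1 = (Iv n k b u hk hkb hu).1 := by rw [hEq]
    simp only [Iv] at h2
    rw [h2, Finset.mem_Icc] at h1
    omega
  · show fmax (Finset.Icc t (t + (k - 1)) ∪ Finset.Icc u (u + (k - 1))) -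
      fmin (Finset.Icc t (t + (k - 1)) ∪ Finset.Icc u (u + (k - 1))) ≤ b
    rw [fmax_union _ _ (Finset.nonempty_Icc.mpr (by omega)) (Finset.nonempty_Icc.mpr (by omega)),
      fmin_union _ _ (Finset.nonempty_Icc.mpr (by omega)) (Finset.nonempty_Icc.mpr (by omega)),
      fmax_Icc _ _ (by omega), fmax_Icc _ _ (by omega), fmin_Icc _ _ (by omega),
      fmin_Icc _ _ (by omega)]
    omega

lemma vertex_facts (n k b : ℕ) (hk : 1 ≤ k) (Z : Finset ℕ) (hZ : Z ∈ Vnkb n k b) :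
    Z.Nonempty ∧ fmin Z + (k - 1) ≤ fmax Z := by
  rw [Vnkb, Finset.mem_filter, Finset.mem_powersetCard] at hZ
  have hcard : Z.card = k := hZ.1.2
  have hne : Z.Nonempty := Finset.card_pos.mp (by omega)
  refine ⟨hne, ?_⟩
  have hsub : Z ⊆ Finset.Icc (fmin Z) (fmax Z) := by
    intro z hz
    rw [Finset.mem_Icc, fmin_eq _ hne, fmax_eq _ hne]
    exact ⟨Finset.min'_le _ _ hz, Finset.le_max' _ _ hz⟩
  have := Finset.card_le_card hsub
  rw [hcard, Nat.card_Icc] at this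
  omega

lemma fmin_adj (n k b : ℕ) (hk : 1 ≤ k) {X Y : Vnkb n k b}
    (h : (Gnkb n k b).Adj X Y) : fmin Y.1 + (k - 1) ≤ fmin X.1 + b := by
  obtain ⟨hXne, hXf⟩ := vertex_facts n k b hk X.1 X.2
  obtain ⟨hYne, hYf⟩ := vertex_facts n k b hk Y.1 Y.2
  have hadj : fmax (X.1 ∪ Y.1) - fmin (X.1 ∪ Y.1) ≤ b := h.2
  rw [fmax_union _ _ hXne hYne, fmin_union _ _ hXne hYne] at hadj
  omega

lemma walk_le (n k b : ℕ) (hk : 1 ≤ k) {X Y : Vnkb n k b}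
    (p : (Gnkb n k b).Walk X Y) :
    (fmin Y.1 : ℤ) ≤ fmin X.1 + p.length * ((b : ℤ) - ((k - 1 : ℕ) : ℤ)) := by
  induction p with
  | nil => simp
  | cons h q ih =>
    rename_i u v w
    have hstep : (fmin v.1 : ℤ) + ((k - 1 : ℕ) : ℤ) ≤ (fmin u.1 : ℤ) + b := by
      exact_mod_cast fmin_adj n k b hk h
    rw [SimpleGraph.Walk.length_cons]
    push_cast
    linarith [ih]

lemma exists_walk (n k b : ℕ) (hk : 1 ≤ k) (hkb : k - 1 ≤ b) (hkb2 : k ≤ b) :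
    ∀ d t (_hd : 0 < d) (_ht : t + d + (k - 1) ≤ n),
    ∃ p : (Gnkb n k b).Walk (Iv n k b t hk hkb (by omega)) (Iv n k b (t + d) hk hkb (by omega)),
      p.length = (d - 1) / (b - (k - 1)) + 1 := by
  intro d
  induction d using Nat.strong_induction_on with
  | _ d ih =>
    intro t hd ht
    set s := b - (k - 1) with hs
    have hs1 : 1 ≤ s := by omega
    by_cases hds : d ≤ s
    · refine ⟨SimpleGraph.Walk.cons (adj_Iv n k b t (t + d) hk hkb (by omega) (by omega)
        (by omega) (by omega)) SimpleGraph.Walk.nil, ?_⟩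
      simp [Nat.div_eq_of_lt (by omega : d - 1 < s)]
    · obtain ⟨q, hq⟩ := ih (d - s) (by omega) (t + s) (by omega) (by omega)
      have hE : t + s + (d - s) = t + d := by omega
      have hcast : Iv n k b (t + s + (d - s)) hk hkb (by omega) =
          Iv n k b (t + d) hk hkb (by omega) := by
        apply Subtype.ext
        simp only [Iv]
        rw [hE]
      refine ⟨SimpleGraph.Walk.cons (adj_Iv n k b t (t + s) hk hkb (by omega) (by omega)
        (by omega) (by omega)) (q.copy rfl hcast), ?_⟩
      rw [SimpleGraph.Walk.length_cons, SimpleGraph.Walk.length_copy, hq,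
        show d - 1 = (d - s - 1) + s by omega, Nat.add_div_right _ (by omega)]

lemma ceil_div_eq (d s : ℕ) (hd1 : 1 ≤ d) (hs1 : 1 ≤ s) :
    (((d - 1) / s + 1 : ℕ) : ℤ) = ⌈((d : ℚ)) / ((s : ℚ))⌉ := by
  set q := (d - 1) / s with hq
  set r := (d - 1) % s with hr
  have hdm : s * q + r = d - 1 := Nat.div_add_mod (d - 1) s
  have hrs : r < s := Nat.mod_lt _ (by omega)
  have hsQpos : (0 : ℚ) < (s : ℚ) := by exact_mod_cast hs1
  have h7 : q * s + 1 ≤ d := by have := Nat.mul_comm q s; omega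
  have h9 : d ≤ (q + 1) * s := by
    have : (q + 1) * s = s * q + s := by ring
    omega
  clear_value q r
  clear hdm hrs hq hr
  apply le_antisymm
  · rw [show ((q + 1 : ℕ) : ℤ) = (q : ℤ) + 1 by push_cast; ring,
      Int.add_one_le_iff, Int.lt_ceil]
    push_cast
    rw [lt_div_iff₀ hsQpos]
    have h8 : ((q * s + 1 : ℕ) : ℚ) ≤ (d : ℚ) := by exact_mod_cast h7
    push_cast at h8
    linarith
  · rw [Int.ceil_le]
    push_cast
    rw [div_le_iff₀ hsQpos]
    have h10 : ((d : ℕ) : ℚ) ≤ (((q + 1) * s : ℕ) : ℚ) := by exact_mod_cast h9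
    push_cast at h10
    linarith

/-- For `0 ≤ i < j ≤ n-(k-1)`, the graph distance in `G_{n,k,b}` between the vertices
`{i, i+1, …, i+k-1}` and `{j, j+1, …, j+k-1}` equals `⌈(j-i)/(b-k+1)⌉`. -/
theorem dist_interval_interval (n k b i j : ℕ)
    (h1 : 1 ≤ k - 1) (h2 : k - 1 ≤ b) (h3 : b ≤ n) (hbk : k ≤ b)
    (hij : i < j) (hj : j ≤ n - (k - 1))
    (X Y : Vnkb n k b)
    (hX : X.1 = Finset.Icc i (i + (k - 1))) (hY : Y.1 = Finset.Icc j (j + (k - 1))) :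
    ((Gnkb n k b).dist X Y : ℤ) = ⌈((j : ℚ) - (i : ℚ)) / ((b : ℚ) - (k : ℚ) + 1)⌉ := by
  have hk : 1 ≤ k := by omega
  set s := b - (k - 1) with hs
  have hs1 : 1 ≤ s := by omega
  set d := j - i with hd
  have hd1 : 1 ≤ d := by omega
  have hkn : k - 1 ≤ n := by omega
  have hin : i + (k - 1) ≤ n := by omega
  have hjn : j + (k - 1) ≤ n := by omega
  have hXI : X = Iv n k b i hk h2 hin := Subtype.ext hX
  have hYI : Y = Iv n k b j hk h2 hjn := Subtype.ext hY
  obtain ⟨p, hp⟩ := exists_walk n k b hk h2 hbk d i hd1 (by omega)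
  have hE : i + d = j := by omega
  have hcast : Iv n k b (i + d) hk h2 (by omega) = Iv n k b j hk h2 hjn := by
    apply Subtype.ext; simp only [Iv]; rw [hE]
  let p' : (Gnkb n k b).Walk X Y := p.copy (hXI.symm ▸ rfl) (hcast.trans hYI.symm)
  set q := (d - 1) / s with hq
  set r := (d - 1) % s with hr
  have hdm : s * q + r = d - 1 := Nat.div_add_mod (d - 1) s
  have hrs : r < s := Nat.mod_lt _ (by omega)
  set D := (Gnkb n k b).dist X Y with hD
  have hub : D ≤ q + 1 := by
    have := SimpleGraph.dist_le p'
    rwa [SimpleGraph.Walk.length_copy, hp] at this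
  have hreach : (Gnkb n k b).Reachable X Y := ⟨p'⟩
  obtain ⟨w, hw⟩ := hreach.exists_walk_length_eq_dist
  have hlow := walk_le n k b hk w
  rw [hX, hY, fmin_Icc _ _ (by omega), fmin_Icc _ _ (by omega), hw, ← hD] at hlow
  have hcastS : ((s : ℕ) : ℤ) = (b : ℤ) - ((k - 1 : ℕ) : ℤ) := by omega
  set M := D * s with hM
  have hmul : ((M : ℕ) : ℤ) = (D : ℤ) * ((s : ℕ) : ℤ) := by rw [hM]; exact Nat.cast_mul D s
  have hlow' : (j : ℤ) ≤ (i : ℤ) + M := by rw [hmul, hcastS]; exact hlow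
  have hnat : d ≤ M := by omega
  have hglow : q + 1 ≤ D := by
    by_contra hc
    push_neg at hc
    have h5 : M ≤ q * s := by
      rw [hM]; exact Nat.mul_le_mul_right s (by omega)
    have h6 : q * s = s * q := Nat.mul_comm _ _
    omega
  have hDeq : D = q + 1 := le_antisymm hub hglow
  have hsQ : ((s : ℕ) : ℚ) = (b : ℚ) - k + 1 := by
    rw [hs, Nat.cast_sub h2, Nat.cast_sub hk, Nat.cast_one]; ring
  have hdQ : (j : ℚ) - i = ((d : ℕ) : ℚ) := by rw [hd, Nat.cast_sub hij.le]
  rw [hdQ, ← hsQ, hDeq, hq]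
  exact ceil_div_eq d s hd1 hs1
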